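/- arXiv:1009.2929 — 4 statements merged into one kernel-verified Lean document; each statement's English description precedes it below -/
import Mathlib

section
/- For all integers m, n ≥ 0, Σ_{j=0}^{m} s(m,j) B_{j+n}(x) = x^m · Σ_{j=0}^{n} C(n,j) B_j(x) m^{n-j} as polynomials in x. -/
open Polynomial Finset

/-- Stirling numbers of the second kind. -/
def stirling2 : ℕ → ℕ → ℕ
  | 0, 0 => 1
  | 0, _ + 1 => 0
  | _ + 1, 0 => 0
  | n + 1, k + 1 => (k + 1) * stirling2 n (k + 1) + stirling2 n k

/-- Signed Stirling numbers of the first kind. -/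
def stirling1 : ℕ → ℕ → ℤ
  | 0, 0 => 1
  | 0, _ + 1 => 0
  | n + 1, 0 => -(n : ℤ) * stirling1 n 0
  | n + 1, k + 1 => stirling1 n k - (n : ℤ) * stirling1 n (k + 1)

/-- The Bell polynomial `B_m(x) = ∑_{j=0}^m S(m,j) x^j` over `ℤ`. -/
noncomputable def bellPoly (m : ℕ) : Polynomial ℤ :=
  ∑ j ∈ range (m + 1), (stirling2 m j : ℤ) • X ^ j

/-- The derangement polynomial `D_m(x) = ∑_{j=0}^m C(m,j) j! (x-1)^{m-j}` over `ℤ`. -/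
noncomputable def derPoly (m : ℕ) : Polynomial ℤ :=
  ∑ j ∈ range (m + 1), ((m.choose j * j.factorial : ℕ) : ℤ) • (X - 1) ^ (m - j)

/-- The Bell numbers `B_m = ∑_j S(m,j)`. -/
def bell (m : ℕ) : ℕ := ∑ j ∈ range (m + 1), stirling2 m j

lemma stirling2_eq_zero : ∀ {m k : ℕ}, m < k → stirling2 m k = 0 := by
  intro m
  induction m with
  | zero => intro k h; cases k with
    | zero => omega
    | succ k => rfl
  | succ m ih =>
    intro k h
    cases k with
    | zero => omega
    | succ k =>
      show (k + 1) * stirling2 m (k + 1) + stirling2 m k = 0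
      rw [ih (by omega), ih (by omega)]
      ring

lemma stirling1_eq_zero : ∀ {m k : ℕ}, m < k → stirling1 m k = 0 := by
  intro m
  induction m with
  | zero => intro k h; cases k with
    | zero => omega
    | succ k => rfl
  | succ m ih =>
    intro k h
    cases k with
    | zero => omega
    | succ k =>
      show stirling1 m k - (m : ℤ) * stirling1 m (k + 1) = 0
      rw [ih (by omega), ih (by omega)]
      ring

lemma coeff_bellPoly (m k : ℕ) : (bellPoly m).coeff k = stirling2 m k := by
  rw [bellPoly, finset_sum_coeff]
  simp only [coeff_smul, coeff_X_pow, smul_eq_mul, mul_ite, mul_one, mul_zero]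
  by_cases h : k ≤ m
  · rw [Finset.sum_ite_eq (range (m+1)) k (fun j => (stirling2 m j : ℤ))]
    simp [Nat.lt_succ_iff.mpr h]
  · rw [Finset.sum_eq_zero, stirling2_eq_zero (by omega)]
    · simp
    · intro j hj
      simp only [mem_range] at hj
      rw [if_neg (by omega)]

lemma bellPoly_succ (m : ℕ) :
    bellPoly (m + 1) = X * (bellPoly m + derivative (bellPoly m)) := by
  ext k
  cases k with
  | zero =>
    rw [coeff_bellPoly, mul_coeff_zero, coeff_X_zero, zero_mul]
    norm_num [show stirling2 (m+1) 0 = 0 from rfl]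
  | succ k =>
    rw [coeff_bellPoly, mul_comm, coeff_mul_X, coeff_add, coeff_bellPoly, coeff_derivative,
      coeff_bellPoly]
    show ((k + 1) * stirling2 m (k + 1) + stirling2 m k : ℕ) = (_ : ℤ)
    push_cast
    ring

lemma sum_C_mul_bell_succ (a : ℕ → ℤ) (N : ℕ) (c : ℕ → ℕ) :
    ∑ j ∈ range N, C (a j) * bellPoly (c j + 1) =
      X * ((∑ j ∈ range N, C (a j) * bellPoly (c j)) +
        derivative (∑ j ∈ range N, C (a j) * bellPoly (c j))) := by
  rw [derivative_sum, ← sum_add_distrib, mul_sum]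
  refine sum_congr rfl fun j _ => ?_
  rw [bellPoly_succ, derivative_C_mul]
  ring

lemma X_mul_der (m : ℕ) : (X : Polynomial ℤ) * derivative (X ^ m) = C (m : ℤ) * X ^ m := by
  cases m with
  | zero => simp
  | succ k =>
    rw [derivative_X_pow, Nat.add_sub_cancel]
    push_cast
    ring

lemma stirling1_bell_base (m : ℕ) :
    ∑ j ∈ range (m + 1), C (stirling1 m j) * bellPoly j = X ^ m := by
  induction m with
  | zero => simp [stirling1, bellPoly, stirling2]
  | succ m ih =>
    have h2 : ∑ j ∈ range (m + 1), C (stirling1 m (j + 1)) * bellPoly (j + 1)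
        = X ^ m - C (stirling1 m 0) * bellPoly 0 := by
      have := sum_range_succ' (fun j => C (stirling1 m j) * bellPoly j) (m + 1)
      rw [sum_range_succ, ih, stirling1_eq_zero (by omega)] at this
      simp only [map_zero, zero_mul, add_zero] at this
      rw [this]; ring
    have h1 : ∑ j ∈ range (m + 2), C (stirling1 (m + 1) j) * bellPoly j
        = (∑ j ∈ range (m + 1), C (stirling1 m j) * bellPoly (j + 1))
          - C (m : ℤ) * (∑ j ∈ range (m + 1), C (stirling1 m (j + 1)) * bellPoly (j + 1))
          - C (m : ℤ) * (C (stirling1 m 0) * bellPoly 0) := by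
      rw [sum_range_succ' (fun j => C (stirling1 (m + 1) j) * bellPoly j) (m + 1),
        show stirling1 (m + 1) 0 = -(m : ℤ) * stirling1 m 0 from rfl, mul_sum, ← sum_sub_distrib]
      rw [show (C (-(m:ℤ) * stirling1 m 0) * bellPoly 0) = -(C (m:ℤ) * (C (stirling1 m 0) * bellPoly 0)) by
        rw [map_mul, map_neg]; ring]
      congr 1
      refine sum_congr rfl fun j _ => ?_
      rw [show stirling1 (m + 1) (j + 1) = stirling1 m j - (m : ℤ) * stirling1 m (j + 1) from rfl,
        map_sub, map_mul]
      ring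
    rw [h1, h2, sum_C_mul_bell_succ (fun j => stirling1 m j) (m+1) (fun j => j), ih, mul_add,
      X_mul_der]
    ring

lemma hF (m n : ℕ) :
    ∑ j ∈ range (n + 1), (n.choose j : ℤ) • (bellPoly j * (m : Polynomial ℤ) ^ (n - j)) =
      ∑ j ∈ range (n + 1), C ((n.choose j : ℤ) * (m : ℤ) ^ (n - j)) * bellPoly j := by
  refine sum_congr rfl fun j _ => ?_
  rw [smul_eq_C_mul, ← C_eq_natCast, ← map_pow, map_mul]
  ring

lemma hB (m n : ℕ) :
    C (m : ℤ) * ∑ j ∈ range (n + 1), (n.choose j : ℤ) • (bellPoly j * (m : Polynomial ℤ) ^ (n - j)) =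
      (∑ j ∈ range (n + 1), (n.choose (j + 1) : ℤ) • (bellPoly (j + 1) * (m : Polynomial ℤ) ^ (n - j))) +
        (n.choose 0 : ℤ) • (bellPoly 0 * (m : Polynomial ℤ) ^ (n + 1)) := by
  have key : C (m : ℤ) * ∑ j ∈ range (n + 1), (n.choose j : ℤ) • (bellPoly j * (m : Polynomial ℤ) ^ (n - j)) =
      ∑ j ∈ range (n + 2), (n.choose j : ℤ) • (bellPoly j * (m : Polynomial ℤ) ^ (n + 1 - j)) := by
    conv_rhs => rw [sum_range_succ]
    rw [Nat.choose_succ_self]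
    push_cast
    rw [zero_smul, add_zero, mul_sum]
    refine sum_congr rfl fun j hj => ?_
    simp only [mem_range] at hj
    rw [mul_smul_comm, C_eq_natCast, show n + 1 - j = (n - j) + 1 by omega]
    ring
  rw [key, sum_range_succ' (fun j => (n.choose j : ℤ) • (bellPoly j * (m : Polynomial ℤ) ^ (n + 1 - j))) (n + 1)]
  refine congrArg₂ (· + ·) ?_ (by rw [Nat.sub_zero])
  refine sum_congr rfl fun j hj => ?_
  simp only [mem_range] at hj
  rw [Nat.succ_sub_succ]

lemma F_succ (m n : ℕ) :
    ∑ j ∈ range (n + 2), ((n + 1).choose j : ℤ) • (bellPoly j * (m : Polynomial ℤ) ^ (n + 1 - j)) =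
      C (m : ℤ) * (∑ j ∈ range (n + 1), (n.choose j : ℤ) • (bellPoly j * (m : Polynomial ℤ) ^ (n - j))) +
        X * ((∑ j ∈ range (n + 1), (n.choose j : ℤ) • (bellPoly j * (m : Polynomial ℤ) ^ (n - j))) +
          derivative (∑ j ∈ range (n + 1), (n.choose j : ℤ) • (bellPoly j * (m : Polynomial ℤ) ^ (n - j)))) := by
  rw [sum_range_succ' (fun j => ((n + 1).choose j : ℤ) • (bellPoly j * (m : Polynomial ℤ) ^ (n + 1 - j))) (n + 1)]
  have split : ∀ j ∈ range (n + 1),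
      (((n + 1).choose (j + 1) : ℤ)) • (bellPoly (j + 1) * (m : Polynomial ℤ) ^ (n + 1 - (j + 1))) =
        (n.choose j : ℤ) • (bellPoly (j + 1) * (m : Polynomial ℤ) ^ (n - j)) +
          (n.choose (j + 1) : ℤ) • (bellPoly (j + 1) * (m : Polynomial ℤ) ^ (n - j)) := by
    intro j hj
    rw [Nat.succ_sub_succ, Nat.choose_succ_succ]
    push_cast
    rw [add_smul]
  rw [sum_congr rfl split, sum_add_distrib]
  have hA : ∑ j ∈ range (n + 1), (n.choose j : ℤ) • (bellPoly (j + 1) * (m : Polynomial ℤ) ^ (n - j)) =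
      X * ((∑ j ∈ range (n + 1), (n.choose j : ℤ) • (bellPoly j * (m : Polynomial ℤ) ^ (n - j))) +
        derivative (∑ j ∈ range (n + 1), (n.choose j : ℤ) • (bellPoly j * (m : Polynomial ℤ) ^ (n - j)))) := by
    have e : ∑ j ∈ range (n + 1), (n.choose j : ℤ) • (bellPoly (j + 1) * (m : Polynomial ℤ) ^ (n - j)) =
        ∑ j ∈ range (n + 1), C ((n.choose j : ℤ) * (m : ℤ) ^ (n - j)) * bellPoly (j + 1) := by
      refine sum_congr rfl fun j _ => ?_
      rw [smul_eq_C_mul, ← C_eq_natCast, ← map_pow, map_mul]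
      ring
    rw [e, sum_C_mul_bell_succ, ← hF]
  have hB' : (∑ j ∈ range (n + 1), (n.choose (j + 1) : ℤ) • (bellPoly (j + 1) * (m : Polynomial ℤ) ^ (n - j))) +
      ((n + 1).choose 0 : ℤ) • (bellPoly 0 * (m : Polynomial ℤ) ^ (n + 1 - 0)) =
      C (m : ℤ) * ∑ j ∈ range (n + 1), (n.choose j : ℤ) • (bellPoly j * (m : Polynomial ℤ) ^ (n - j)) := by
    rw [hB]
    norm_num
  rw [hA, add_assoc, hB']
  ring

theorem stirling1_bellPoly_shift (m n : ℕ) :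
    ∑ j ∈ range (m + 1), C (stirling1 m j) * bellPoly (j + n) =
      X ^ m * ∑ j ∈ range (n + 1), (n.choose j : ℤ) • (bellPoly j * (m : Polynomial ℤ) ^ (n - j)) := by
  induction n with
  | zero =>
    simp only [Nat.add_zero, range_one, sum_singleton, Nat.choose_self, Nat.cast_one, pow_zero,
      mul_one, one_smul]
    rw [stirling1_bell_base]
    simp [bellPoly, stirling2, mul_comm]
  | succ n ih =>
    have step : ∑ j ∈ range (m + 1), C (stirling1 m j) * bellPoly (j + (n + 1)) =
        X * ((∑ j ∈ range (m + 1), C (stirling1 m j) * bellPoly (j + n)) +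
          derivative (∑ j ∈ range (m + 1), C (stirling1 m j) * bellPoly (j + n))) := by
      have := sum_C_mul_bell_succ (fun j => stirling1 m j) (m + 1) (fun j => j + n)
      simpa [add_assoc] using this
    rw [step, ih, derivative_mul]
    have key : X * (X ^ m * (∑ j ∈ range (n + 1), (n.choose j : ℤ) • (bellPoly j * (m : Polynomial ℤ) ^ (n - j))) +
        (derivative (X ^ m) * (∑ j ∈ range (n + 1), (n.choose j : ℤ) • (bellPoly j * (m : Polynomial ℤ) ^ (n - j))) +
          X ^ m * derivative (∑ j ∈ range (n + 1), (n.choose j : ℤ) • (bellPoly j * (m : Polynomial ℤ) ^ (n - j))))) =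
        X ^ m * (C (m : ℤ) * (∑ j ∈ range (n + 1), (n.choose j : ℤ) • (bellPoly j * (m : Polynomial ℤ) ^ (n - j))) +
          X * ((∑ j ∈ range (n + 1), (n.choose j : ℤ) • (bellPoly j * (m : Polynomial ℤ) ^ (n - j))) +
            derivative (∑ j ∈ range (n + 1), (n.choose j : ℤ) • (bellPoly j * (m : Polynomial ℤ) ^ (n - j))))) := by
      rw [show ∀ F dF : Polynomial ℤ,
          X * (X ^ m * F + (derivative (X ^ m) * F + X ^ m * dF)) =
            (X * derivative (X ^ m)) * F + X ^ m * (X * F + X * dF) from fun F dF => by ring,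
        X_mul_der]
      ring
    rw [key, F_succ]
end

section
/- For every prime p and every integer n ≥ 0, B_{p+n} ≡ B_n + B_{n+1} (mod p) (Touchard's congruence), where B_k is the k-th Bell number. -/
open Polynomial Finset

/-! ### Auxiliary development -/

/-- Falling factorial polynomial `x(x-1)⋯(x-k+1)`. -/
noncomputable def ffp (R : Type*) [CommRing R] (k : ℕ) : Polynomial R :=
  ∏ i ∈ range k, (X - C (i : R))

variable {R : Type*} [CommRing R]

lemma ffp_succ (k : ℕ) : ffp R (k + 1) = ffp R k * (X - C (k : R)) :=
  prod_range_succ _ _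

lemma stirling2_eq_zero_of_lt : ∀ {n k : ℕ}, n < k → stirling2 n k = 0
  | 0, _ + 1, _ => rfl
  | n + 1, k + 1, h => by
    have h1 : n < k + 1 := by omega
    have h2 : n < k := by omega
    simp [stirling2, stirling2_eq_zero_of_lt h1, stirling2_eq_zero_of_lt h2]

lemma stirling2_self : ∀ k : ℕ, stirling2 k k = 1
  | 0 => rfl
  | k + 1 => by
    simp [stirling2, stirling2_self k, stirling2_eq_zero_of_lt (Nat.lt_succ_self k)]

lemma stirling2_succ_zero (n : ℕ) : stirling2 (n + 1) 0 = 0 := rfl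

/-- `X^n` in the falling factorial basis. -/
lemma X_pow_eq_sum_ffp (n : ℕ) :
    (X : Polynomial R) ^ n = ∑ k ∈ range (n + 1), C (stirling2 n k : R) * ffp R k := by
  induction n with
  | zero => simp [ffp, stirling2]
  | succ n ih =>
    have hXff : ∀ k : ℕ, (X : Polynomial R) * ffp R k
        = ffp R (k + 1) + C (k : R) * ffp R k := by
      intro k; rw [ffp_succ]; ring
    calc (X : Polynomial R) ^ (n + 1) = X * X ^ n := by ring
      _ = ∑ k ∈ range (n + 1), C (stirling2 n k : R) * (X * ffp R k) := by
          rw [ih, Finset.mul_sum]; apply Finset.sum_congr rfl; intros; ring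
      _ = ∑ k ∈ range (n + 1), C (stirling2 n k : R) * ffp R (k + 1)
          + ∑ k ∈ range (n + 1), C ((k : R) * (stirling2 n k : R)) * ffp R k := by
          rw [← Finset.sum_add_distrib]; apply Finset.sum_congr rfl; intro k _
          rw [hXff k]; push_cast [map_mul, map_add]; ring
      _ = ∑ k ∈ range (n + 1), C (stirling2 n k : R) * ffp R (k + 1)
          + ∑ k ∈ range (n + 1), C (((k + 1) : R) * (stirling2 n (k + 1) : R)) * ffp R (k + 1) := by
          congr 1
          rw [Finset.sum_range_succ' (fun k => C ((k : R) * (stirling2 n k : R)) * ffp R k)]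
          rw [Finset.sum_range_succ]
          simp [stirling2_eq_zero_of_lt (Nat.lt_succ_self n)]
      _ = ∑ k ∈ range (n + 1), C (stirling2 (n + 1) (k + 1) : R) * ffp R (k + 1) := by
          rw [← Finset.sum_add_distrib]; apply Finset.sum_congr rfl; intro k _
          show _ = C (((k + 1) * stirling2 n (k + 1) + stirling2 n k : ℕ) : R) * _
          push_cast [map_mul, map_add]; ring
      _ = ∑ k ∈ range (n + 2), C (stirling2 (n + 1) k : R) * ffp R k := by
          rw [Finset.sum_range_succ' (fun k => C (stirling2 (n + 1) k : R) * ffp R k)]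
          simp [stirling2_succ_zero]

/-- The Bell functional: `X^m ↦ bell m`. -/
noncomputable def Tb (R : Type*) [CommRing R] : Polynomial R →ₗ[R] R :=
  Polynomial.lsum fun j => (bell j : R) • LinearMap.id

lemma Tb_X_pow (m : ℕ) : Tb R (X ^ m) = (bell m : R) := by
  rw [Tb, X_pow_eq_monomial, lsum_apply, Polynomial.sum_monomial_index]
  · simp
  · simp

lemma Tb_C_mul (a : R) (f : Polynomial R) : Tb R (C a * f) = a * Tb R f := by
  rw [← smul_eq_C_mul, map_smul, smul_eq_mul]

lemma Tb_ffp : ∀ k : ℕ, Tb R (ffp R k) = 1 := by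
  intro k
  induction k using Nat.strong_induction_on with
  | _ k ih =>
    have h1 : (bell k : R) = ∑ i ∈ range k, (stirling2 k i : R) + 1 := by
      rw [bell]; push_cast
      rw [Finset.sum_range_succ, stirling2_self]; push_cast; ring
    have h2 : Tb R ((X : Polynomial R) ^ k)
        = ∑ i ∈ range k, (stirling2 k i : R) + Tb R (ffp R k) := by
      rw [X_pow_eq_sum_ffp, map_sum, Finset.sum_range_succ]
      rw [Tb_C_mul, stirling2_self]
      push_cast
      rw [one_mul]
      congr 1
      apply Finset.sum_congr rfl
      intro i hi
      rw [Tb_C_mul, ih i (Finset.mem_range.mp hi), mul_one]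
    rw [Tb_X_pow, h1] at h2
    exact (add_left_cancel h2).symm

theorem bell_touchard (p : ℕ) (hp : p.Prime) (n : ℕ) :
    bell (p + n) ≡ bell n + bell (n + 1) [MOD p] := by
  haveI : Fact p.Prime := ⟨hp⟩
  set K := ZMod p
  -- ffp p = X^p - X
  have hcard : Fintype.card K = p := ZMod.card p
  have hdeg : (X ^ p - X : Polynomial K).natDegree = p :=
    FiniteField.X_pow_card_sub_X_natDegree_eq K hp.one_lt
  have hmonic : (X ^ p - X : Polynomial K).Monic := by
    apply monic_X_pow_sub
    calc degree (X : Polynomial K) = 1 := degree_X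
      _ < (p : WithBot ℕ) := by exact_mod_cast Nat.one_lt_cast.mpr hp.one_lt
  have hroots : (X ^ p - X : Polynomial K).roots = Finset.univ.val := by
    have := FiniteField.roots_X_pow_card_sub_X K
    rwa [hcard] at this
  have hprod : ∏ a : K, (X - C a) = X ^ p - X := by
    have h := prod_multiset_X_sub_C_of_monic_of_roots_card_eq hmonic
      (by rw [hroots, hdeg]; simp [hcard])
    rw [hroots] at h
    rw [Finset.prod_eq_multiset_prod]
    exact h
  have hffp : ffp K p = X ^ p - X := by
    rw [← hprod, ffp]
    refine Finset.prod_nbij (fun i => (i : K)) (fun a _ => Finset.mem_univ _) ?_ ?_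
      (fun i _ => rfl)
    · intro i hi j hj hij
      simp only [Finset.coe_range, Set.mem_Iio] at hi hj
      have := congrArg ZMod.val hij
      rwa [ZMod.val_natCast_of_lt hi, ZMod.val_natCast_of_lt hj] at this
    · intro a _
      refine ⟨a.val, ?_, ZMod.natCast_zmod_val a⟩
      simp only [Finset.coe_range, Set.mem_Iio]
      exact ZMod.val_lt a
  have hXp : (X : Polynomial K) ^ p = ffp K p + X := by rw [hffp]; ring
  have hffpadd : ∀ k : ℕ, ffp K (p + k) = ffp K p * ffp K k := by
    intro k
    show ∏ i ∈ range (p + k), (X - C (i : K)) = _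
    rw [Finset.prod_range_add]
    congr 1
    apply Finset.prod_congr rfl
    intro i _
    have : ((p + i : ℕ) : K) = (i : K) := by
      rw [Nat.cast_add, ZMod.natCast_self, zero_add]
    rw [this]
  -- main computation
  have key : ((bell (p + n) : ℕ) : K) = ((bell n + bell (n + 1) : ℕ) : K) := by
    have e1 : (X : Polynomial K) ^ (p + n)
        = ∑ k ∈ range (n + 1), C (stirling2 n k : K) * ffp K (p + k) + X ^ (n + 1) := by
      calc (X : Polynomial K) ^ (p + n) = X ^ p * X ^ n := by rw [pow_add]
        _ = (ffp K p + X) * X ^ n := by rw [hXp]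
        _ = ffp K p * X ^ n + X ^ (n + 1) := by ring
        _ = ffp K p * (∑ k ∈ range (n + 1), C (stirling2 n k : K) * ffp K k) + X ^ (n + 1) := by
            rw [← X_pow_eq_sum_ffp n]
        _ = ∑ k ∈ range (n + 1), C (stirling2 n k : K) * ffp K (p + k) + X ^ (n + 1) := by
            rw [Finset.mul_sum]
            congr 1
            apply Finset.sum_congr rfl; intro k _
            rw [hffpadd k]; ring
    have e2 := congrArg (Tb K) e1
    rw [Tb_X_pow, map_add, map_sum, Tb_X_pow] at e2
    have e3 : ∑ k ∈ range (n + 1), Tb K (C (stirling2 n k : K) * ffp K (p + k))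
        = ((bell n : ℕ) : K) := by
      rw [bell, Nat.cast_sum]
      apply Finset.sum_congr rfl
      intro k _
      rw [Tb_C_mul, Tb_ffp, mul_one]
    rw [e3] at e2
    push_cast
    linear_combination e2
  exact (ZMod.natCast_eq_natCast_iff _ _ _).mp key
end

section
/- For every prime p, the polynomial congruence B_{p-1}(x) ≡ 1 + D_{p-1}(1-x) (mod p) holds, i.e., each coefficient of B_{p-1}(x) − 1 − D_{p-1}(1-x) is divisible by p. -/
open Polynomial Finset

lemma choose_id (k i : ℕ) : ((i:ℤ)) * ((k+1).choose i) = (k+1) * ((k+1).choose i) - (k+1) * (k.choose i) := by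
  cases i with
  | zero => simp
  | succ i =>
    have h1 : (k+1) * k.choose i = (k+1).choose (i+1) * (i+1) := Nat.add_one_mul_choose_eq k i
    have h2 : (k+1).choose (i+1) = k.choose i + k.choose (i+1) := Nat.choose_succ_succ k i
    have h1' : ((k:ℤ)+1) * k.choose i = (k+1).choose (i+1) * (i+1) := by exact_mod_cast h1
    have h2' : (((k+1).choose (i+1) : ℤ)) = k.choose i + k.choose (i+1) := by exact_mod_cast h2
    push_cast
    linear_combination -h1' - ((k:ℤ)+1)*h2'

lemma stirling2_fact_eq (m : ℕ) : ∀ k : ℕ, (k.factorial : ℤ) * stirling2 m k =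
    (-1)^k * ∑ i ∈ range (k+1), (-1)^i * (k.choose i) * (i:ℤ)^m := by
  induction m with
  | zero =>
    intro k
    cases k with
    | zero => simp [stirling2]
    | succ k =>
      have h := Int.alternating_sum_range_choose (n := k+1)
      simp only [pow_zero, mul_one, stirling2, Nat.cast_zero, mul_zero]
      rw [h]
      simp
  | succ m ih =>
    intro k
    cases k with
    | zero =>
      simp [stirling2, zero_pow]
    | succ k =>
      have recc : ((stirling2 (m+1) (k+1) : ℕ) : ℤ) = (k+1) * stirling2 m (k+1) + stirling2 m k := by
        show ((((k + 1) * stirling2 m (k + 1) + stirling2 m k : ℕ)) : ℤ) = _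
        push_cast; ring
      have expand : ∀ i ∈ range (k+2), (-1:ℤ)^i * ((k+1).choose i) * (i:ℤ)^(m+1)
          = ((k:ℤ)+1) * ((-1)^i * ((k+1).choose i) * (i:ℤ)^m)
            - ((k:ℤ)+1) * ((-1)^i * (k.choose i) * (i:ℤ)^m) := by
        intro i _
        have h := choose_id k i
        have hpw : (i:ℤ)^(m+1) = (i:ℤ)^m * i := pow_succ _ _
        rw [hpw]
        linear_combination ((-1:ℤ)^i * (i:ℤ)^m) * h
      have hstep : ∑ i ∈ range (k+2), (-1:ℤ)^i * ((k+1).choose i) * (i:ℤ)^(m+1)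
          = ((k:ℤ)+1) * (∑ i ∈ range (k+2), (-1:ℤ)^i * ((k+1).choose i) * (i:ℤ)^m)
            - ((k:ℤ)+1) * (∑ i ∈ range (k+1), (-1:ℤ)^i * (k.choose i) * (i:ℤ)^m) := by
        rw [Finset.sum_congr rfl expand, Finset.sum_sub_distrib, ← Finset.mul_sum, ← Finset.mul_sum]
        congr 1
        rw [Finset.sum_range_succ]
        simp [Nat.choose_succ_self]
      have e1 := ih (k+1)
      have e2 := ih k
      rw [recc, hstep]
      have hf : (((k+1).factorial : ℕ) : ℤ) = ((k:ℤ)+1) * (k.factorial) := by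
        rw [Nat.factorial_succ]; push_cast; ring
      rw [hf] at e1 ⊢
      linear_combination ((k:ℤ)+1) * e1 + ((k:ℤ)+1) * e2

theorem bellPoly_pred_prime (p : ℕ) (hp : p.Prime) :
    ∀ i, (p : ℤ) ∣ (bellPoly (p - 1) - 1 - (derPoly (p - 1)).comp (1 - X)).coeff i := by
  haveI : Fact p.Prime := ⟨hp⟩
  intro i
  set q := p - 1 with hqdef
  have hq1 : 1 ≤ q := by have := hp.two_le; omega
  have hqp : q < p := by have := hp.two_le; omega
  -- closed form for the composed derangement polynomial
  have hcomp : (derPoly q).comp (1 - X) =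
      ∑ j ∈ range (q+1), ((q.choose j * j.factorial : ℕ) : ℤ) • ((-X : ℤ[X])^(q - j)) := by
    unfold derPoly
    rw [Polynomial.comp, Polynomial.eval₂_finset_sum]
    refine Finset.sum_congr rfl fun j _ => ?_
    rw [smul_eq_C_mul, smul_eq_C_mul, eval₂_mul, eval₂_C, eval₂_pow, eval₂_sub, eval₂_X, eval₂_one]
    congr 2
    ring
  have hrefl : (derPoly q).comp (1 - X) =
      ∑ j ∈ range (q+1), ((q.choose (q-j) * (q-j).factorial : ℕ) : ℤ) • ((-1:ℤ)^j • (X:ℤ[X])^j) := by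
    rw [hcomp, ← Finset.sum_range_reflect]
    refine Finset.sum_congr rfl fun j hj => ?_
    rw [Finset.mem_range] at hj
    have h1 : q + 1 - 1 - j = q - j := by omega
    have h2 : q - (q - j) = j := by omega
    rw [h1, h2]
    congr 1
    rw [neg_pow]
    simp [smul_smul, Polynomial.smul_eq_C_mul]
  -- coefficients
  have hbell : (bellPoly q).coeff i = if i < q + 1 then (stirling2 q i : ℤ) else 0 := by
    unfold bellPoly
    rw [Polynomial.finset_sum_coeff]
    simp only [Polynomial.coeff_smul, Polynomial.coeff_X_pow, smul_eq_mul, mul_ite, mul_one, mul_zero]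
    rw [Finset.sum_ite_eq (range (q+1)) i]
    simp
  have hder : ((derPoly q).comp (1 - X)).coeff i =
      if i < q + 1 then (-1:ℤ)^i * ((q.choose (q-i) * (q-i).factorial : ℕ) : ℤ) else 0 := by
    rw [hrefl, Polynomial.finset_sum_coeff]
    simp only [Polynomial.coeff_smul, Polynomial.coeff_X_pow, smul_eq_mul, mul_ite, mul_one, mul_zero]
    rw [Finset.sum_ite_eq (range (q+1)) i]
    simp only [Finset.mem_range]
    split <;> ring_nf
  rw [← ZMod.intCast_zmod_eq_zero_iff_dvd]
  rw [Polynomial.coeff_sub, Polynomial.coeff_sub, hbell, hder, Polynomial.coeff_one]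
  by_cases hi : i < q + 1
  · by_cases hi0 : i = 0
    · subst hi0
      simp only [if_pos hi, if_pos rfl]
      have hs0 : stirling2 q 0 = 0 := by
        obtain ⟨n, hn⟩ : ∃ n, q = n + 1 := ⟨q - 1, by omega⟩
        rw [hn]; rfl
      rw [hs0]
      have hw : ((q.factorial : ℕ) : ZMod p) = -1 := by
        have := ZMod.wilsons_lemma p
        rwa [← hqdef] at this
      have : q.choose (q - 0) = 1 := by simp
      push_cast
      rw [Nat.sub_zero, Nat.choose_self, hw]
      push_cast
      ring
    · simp only [if_pos hi, if_neg hi0]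
      have hiq : i ≤ q := by omega
      -- work in ZMod p
      have hfac_ne : ((i.factorial : ℕ) : ZMod p) ≠ 0 := by
        rw [Ne, ZMod.natCast_eq_zero_iff]
        intro h
        have := (Nat.Prime.dvd_factorial hp).mp h
        omega
      -- A: i! * S(q,i) = (-1)^(i+1) in ZMod p
      have key := stirling2_fact_eq q i
      have keyZ : ((i.factorial : ℕ) : ZMod p) * (stirling2 q i : ZMod p)
          = (-1)^i * ∑ j ∈ range (i+1), (-1:ZMod p)^j * (i.choose j) * (j:ZMod p)^q := by
        have := congrArg (fun z : ℤ => (z : ZMod p)) key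
        push_cast at this
        convert this using 3
      have hsum : ∑ j ∈ range (i+1), (-1:ZMod p)^j * (i.choose j) * (j:ZMod p)^q = -1 := by
        have hterm : ∀ j ∈ range i, (-1:ZMod p)^(j+1) * (i.choose (j+1)) * (((j+1:ℕ)):ZMod p)^q
            = (-1:ZMod p)^(j+1) * (i.choose (j+1)) := by
          intro j hj
          rw [Finset.mem_range] at hj
          have hne : (((j+1:ℕ)):ZMod p) ≠ 0 := by
            rw [Ne, ZMod.natCast_eq_zero_iff]
            intro h
            have := Nat.le_of_dvd (by omega) h
            omega
          rw [hqdef] at *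
          rw [ZMod.pow_card_sub_one_eq_one hne, mul_one]
        have halt : ∑ j ∈ range (i+1), (-1:ZMod p)^j * (i.choose j) = 0 := by
          have h := Int.alternating_sum_range_choose (n := i)
          rw [if_neg hi0] at h
          have := congrArg (fun z : ℤ => (z : ZMod p)) h
          push_cast at this
          exact this
        rw [Finset.sum_range_succ'] at halt ⊢
        rw [Finset.sum_congr rfl hterm]
        have h0q : ((0:ℕ):ZMod p)^q = 0 := by
          rw [Nat.cast_zero, zero_pow]
          omega
        rw [h0q, mul_zero]
        simp only [Nat.choose_zero_right, Nat.cast_one, pow_zero, one_mul, mul_one] at halt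
        linear_combination halt
      have hA : ((i.factorial : ℕ) : ZMod p) * (stirling2 q i : ZMod p) = (-1)^(i+1) := by
        rw [keyZ, hsum]
        ring
      -- B: i! * ((-1)^i * C(q,q-i)*(q-i)!) = (-1)^(i+1)
      have hnat : q.choose (q-i) * (q-i).factorial * i.factorial = q.factorial := by
        have h := Nat.choose_mul_factorial_mul_factorial (n := q) (k := q - i) (by omega)
        have : q - (q - i) = i := by omega
        rw [this] at h
        exact h
      have hw : ((q.factorial : ℕ) : ZMod p) = -1 := by
        have := ZMod.wilsons_lemma p
        rwa [← hqdef] at this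
      have hB : ((i.factorial : ℕ) : ZMod p) * ((-1:ZMod p)^i * ((q.choose (q-i) * (q-i).factorial : ℕ) : ZMod p))
          = (-1)^(i+1) := by
        have hcast : ((q.choose (q-i) * (q-i).factorial : ℕ) : ZMod p) * ((i.factorial : ℕ) : ZMod p) = -1 := by
          rw [← Nat.cast_mul, hnat, hw]
        linear_combination (-1:ZMod p)^i * hcast
      -- combine
      have : ((i.factorial : ℕ) : ZMod p) * ((stirling2 q i : ZMod p) - 0
          - (-1:ZMod p)^i * ((q.choose (q-i) * (q-i).factorial : ℕ) : ZMod p)) = 0 := by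
        rw [mul_sub, mul_sub, hA, hB]
        ring
      have h2 := (mul_eq_zero.mp this).resolve_left hfac_ne
      push_cast
      push_cast at h2
      linear_combination h2
  · rw [if_neg hi, if_neg hi]
    have : ¬ (i = 0) := by omega
    rw [if_neg this]
    push_cast
    ring
end

section
/- For every prime p, B_{p-1} ≡ 1 + D_{p-1} (mod p), where B_{p-1} is the (p-1)-st Bell number and D_{p-1} is the (p-1)-st derangement number. -/
open Polynomial Finset

lemma stirling2_sum_eq (n k : ℕ) :
    (k.factorial : ℤ) * stirling2 n k
      = (-1) ^ k * ∑ j ∈ range (k + 1), (-1 : ℤ) ^ j * (k.choose j) * (j : ℤ) ^ n := by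
  induction n generalizing k with
  | zero =>
    cases k with
    | zero => simp [stirling2]
    | succ k =>
      simp only [stirling2, Nat.cast_zero, mul_zero, pow_zero, mul_one]
      rw [Int.alternating_sum_range_choose]
      simp
  | succ n ih =>
    cases k with
    | zero => simp [stirling2]
    | succ k =>
      have h1 : (((k + 1).factorial : ℤ)) * stirling2 (n + 1) (k + 1)
          = (k + 1) * (((k + 1).factorial : ℤ) * stirling2 n (k + 1))
            + (k + 1) * ((k.factorial : ℤ) * stirling2 n k) := by
        show (((k + 1).factorial : ℤ)) * ((k + 1) * stirling2 n (k + 1) + stirling2 n k) = _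
        rw [Nat.factorial_succ]
        push_cast
        ring
      rw [h1, ih, ih]
      -- Now prove the sum identity
      have h2 : ∑ j ∈ range (k + 2), (-1 : ℤ) ^ j * (k.choose j) * (j : ℤ) ^ n
          = ∑ j ∈ range (k + 1), (-1 : ℤ) ^ j * (k.choose j) * (j : ℤ) ^ n := by
        rw [Finset.sum_range_succ, Nat.choose_succ_self]
        simp
      have h3 : ∑ j ∈ range (k + 2), (-1 : ℤ) ^ j * ((k + 1).choose j) * (j : ℤ) ^ n
            - ∑ j ∈ range (k + 2), (-1 : ℤ) ^ j * (k.choose j) * (j : ℤ) ^ n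
          = ∑ i ∈ range (k + 1), (-1 : ℤ) ^ (i + 1) * (k.choose i) * ((i : ℤ) + 1) ^ n := by
        rw [← Finset.sum_sub_distrib, Finset.sum_range_succ']
        have hz : ((-1 : ℤ) ^ 0 * ((k + 1).choose 0) * ((0 : ℕ) : ℤ) ^ n
            - (-1 : ℤ) ^ 0 * (k.choose 0) * ((0 : ℕ) : ℤ) ^ n) = 0 := by simp
        rw [hz, add_zero]
        refine Finset.sum_congr rfl fun i _ => ?_
        have hc : ((k + 1).choose (i + 1) : ℤ) = (k.choose i : ℤ) + (k.choose (i + 1) : ℤ) := by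
          rw [← Nat.cast_add, Nat.choose_succ_succ]
        push_cast
        rw [hc]
        ring
      have key : ∑ j ∈ range (k + 2), (-1 : ℤ) ^ j * ((k + 1).choose j) * (j : ℤ) ^ (n + 1)
          = (k + 1) * (∑ j ∈ range (k + 2), (-1 : ℤ) ^ j * ((k + 1).choose j) * (j : ℤ) ^ n
            - ∑ j ∈ range (k + 1), (-1 : ℤ) ^ j * (k.choose j) * (j : ℤ) ^ n) := by
        rw [← h2, h3, Finset.sum_range_succ', Finset.mul_sum]
        have hz : (-1 : ℤ) ^ 0 * ((k + 1).choose 0) * ((0 : ℕ) : ℤ) ^ (n + 1) = 0 := by simp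
        rw [hz, add_zero]
        refine Finset.sum_congr rfl fun i _ => ?_
        have hc : ((k : ℤ) + 1) * (k.choose i : ℤ) = ((k + 1).choose (i + 1) : ℤ) * ((i : ℤ) + 1) := by
          exact_mod_cast congrArg (Nat.cast : ℕ → ℤ) (Nat.add_one_mul_choose_eq k i)
        push_cast
        rw [mul_comm ((k : ℤ) + 1)]
        calc (-1:ℤ) ^ (i+1) * ((k + 1).choose (i + 1)) * ((i:ℤ) + 1) ^ (n + 1)
            = ((-1:ℤ) ^ (i+1) * (((k + 1).choose (i + 1)) * ((i:ℤ)+1)) * ((i:ℤ) + 1) ^ n) := by ring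
          _ = _ := by rw [← hc]; ring
      rw [key]
      ring

theorem bell_pred_congr (p : ℕ) (hp : p.Prime) :
    (bell (p - 1) : ℤ) ≡ 1 + (numDerangements (p - 1) : ℤ) [ZMOD p] := by
  haveI : Fact p.Prime := ⟨hp⟩
  rw [← ZMod.intCast_eq_intCast_iff]
  push_cast
  set q := p - 1 with hqdef
  have hq : q + 1 = p := Nat.succ_pred_eq_of_pos hp.pos
  have hq1 : 1 ≤ q := by have := hp.two_le; omega
  have hfac_ne : ∀ k, k ≤ q → ((k.factorial : ZMod p)) ≠ 0 := by
    intro k hk h0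
    rw [ZMod.natCast_eq_zero_iff] at h0
    have := (Nat.Prime.dvd_factorial hp).mp h0
    omega
  -- Fermat's little theorem consequence
  have hpow : ∀ j : ℕ, 1 ≤ j → j ≤ q → ((j : ZMod p)) ^ q = 1 := by
    intro j h1 h2
    have hne : ((j : ZMod p)) ≠ 0 := by
      intro h0
      rw [ZMod.natCast_eq_zero_iff] at h0
      have := Nat.le_of_dvd (by omega) h0
      omega
    exact ZMod.pow_card_sub_one_eq_one hne
  have key : ∀ k, 1 ≤ k → k ≤ q →
      (stirling2 q k : ZMod p) = (-1) ^ (k + 1) * ((k.factorial : ZMod p))⁻¹ := by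
    intro k h1 h2
    have hz := stirling2_sum_eq q k
    have hzc : ((k.factorial : ZMod p)) * (stirling2 q k : ZMod p)
        = (-1) ^ k * ∑ j ∈ range (k + 1), (-1 : ZMod p) ^ j * (k.choose j) * ((j : ZMod p)) ^ q := by
      have := congrArg (fun z : ℤ => (z : ZMod p)) hz
      push_cast at this
      exact this
    have hsum : ∑ j ∈ range (k + 1), (-1 : ZMod p) ^ j * (k.choose j) * ((j : ZMod p)) ^ q = -1 := by
      rw [Finset.sum_range_succ']
      have hz0 : (-1 : ZMod p) ^ 0 * ((k.choose 0 : ℕ) : ZMod p) * (((0:ℕ) : ZMod p)) ^ q = 0 := by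
        simp [zero_pow (by omega : q ≠ 0)]
      rw [hz0, add_zero]
      have hterm : ∀ i ∈ range k, (-1 : ZMod p) ^ (i + 1) * ((k.choose (i+1) : ℕ) : ZMod p)
            * (((i + 1 : ℕ) : ZMod p)) ^ q
          = (-1 : ZMod p) ^ (i + 1) * ((k.choose (i+1) : ℕ) : ZMod p) := by
        intro i hi
        rw [hpow (i+1) (by omega) (by simp at hi; omega), mul_one]
      rw [Finset.sum_congr rfl hterm]
      -- alternating sum over ℤ
      have hAltZ : ∑ i ∈ range k, (-1 : ℤ) ^ (i + 1) * (k.choose (i+1)) = -1 := by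
        have h := Int.alternating_sum_range_choose_of_ne (n := k) (by omega)
        rw [Finset.sum_range_succ'] at h
        simp only [pow_zero, one_mul, Nat.choose_zero_right, Nat.cast_one] at h
        omega
      have := congrArg (fun z : ℤ => (z : ZMod p)) hAltZ
      push_cast at this
      exact this
    rw [hsum] at hzc
    have hne := hfac_ne k h2
    field_simp
    rw [mul_comm] at hzc
    rw [hzc]
    ring
  -- Bell side
  obtain ⟨m, hm⟩ : ∃ m, q = m + 1 := ⟨q - 1, by omega⟩
  have hbell : ((bell q : ℕ) : ZMod p)
      = ∑ i ∈ range q, (-1 : ZMod p) ^ (i + 1 + 1) * (((i+1).factorial : ZMod p))⁻¹ := by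
    rw [bell]
    push_cast
    rw [Finset.sum_range_succ']
    have h0 : ((stirling2 q 0 : ℕ) : ZMod p) = 0 := by
      rw [hm]; simp [stirling2]
    rw [h0, add_zero]
    refine Finset.sum_congr rfl fun i hi => ?_
    rw [key (i+1) (by omega) (by simp at hi; omega)]
  -- Derangement side
  have hder : ((numDerangements q : ℕ) : ZMod p)
      = -1 + ∑ i ∈ range q, (-1 : ZMod p) ^ (i + 1 + 1) * (((i+1).factorial : ZMod p))⁻¹ := by
    have hD := numDerangements_sum q
    have hDc := congrArg (fun z : ℤ => (z : ZMod p)) hD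
    push_cast at hDc
    rw [hDc]
    have hasc : ∀ k, k ≤ q → (((k+1).ascFactorial (q - k) : ℕ) : ZMod p)
        = -((k.factorial : ZMod p))⁻¹ := by
      intro k hk
      have h1 : k.factorial * (k+1).ascFactorial (q - k) = q.factorial := by
        rw [Nat.factorial_mul_ascFactorial]
        congr 1
        omega
      have h2 : ((k.factorial : ZMod p)) * (((k+1).ascFactorial (q - k) : ℕ) : ZMod p) = -1 := by
        rw [← Nat.cast_mul, h1, hqdef, ZMod.wilsons_lemma]
      have hne := hfac_ne k hk
      field_simp
      rw [mul_comm] at h2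
      rw [h2]
    have hterm : ∀ k ∈ range (q + 1), (-1 : ZMod p) ^ k * (((k+1).ascFactorial (q - k) : ℕ) : ZMod p)
        = (-1 : ZMod p) ^ (k+1) * ((k.factorial : ZMod p))⁻¹ := by
      intro k hk
      rw [hasc k (by simp at hk; omega)]
      ring
    rw [Finset.sum_congr rfl hterm, Finset.sum_range_succ']
    have h0 : (-1 : ZMod p) ^ (0 + 1) * (((Nat.factorial 0 : ℕ)) : ZMod p)⁻¹ = -1 := by
      norm_num
    rw [h0, add_comm]
  rw [hbell, hder]
  ring
end
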